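/- Suppose R: ℕ → A satisfies R(0) = 1 and the recurrence n·R(n) = Σ_{k=1}^{n} R(n−k)·I(k) for all n ≥ 1. Then for every n ≥ 1, R(n) = Σ_{m=1}^{n} Σ_{(j₁,…,j_m)} C₊(j₁,…,j_m) · I(j₁)·I(j₂)⋯I(j_m), where the inner sum runs over all m-tuples of positive integers with j₁ + ⋯ + j_m = n and C₊(j₁,…,j_m) = 1/(j₁·(j₁+j₂)·(j₁+j₂+j₃)⋯(j₁+⋯+j_m)). -/

import Mathlib

open Finset

noncomputable def coefC (b : List ℕ) : ℚ :=
  ∏ i ∈ Finset.range b.length, (((b.take (i + 1)).sum : ℚ))⁻¹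

lemma coefC_append (b : List ℕ) (k : ℕ) :
    coefC (b ++ [k]) = coefC b * (((b.sum + k : ℕ) : ℚ))⁻¹ := by
  unfold coefC
  rw [List.length_append, List.length_singleton, Finset.prod_range_succ]
  congr 1
  · apply Finset.prod_congr rfl
    intro i hi
    rw [List.take_append_of_le_length (by simpa using Finset.mem_range.1 hi)]
  · rw [List.take_of_length_le (by simp)]
    simp

lemma blocks_ne_nil {n : ℕ} (hn : 1 ≤ n) (c : Composition n) : c.blocks ≠ [] := by
  intro h
  have := c.blocks_sum
  rw [h] at this; simp at this; omega

lemma dropLast_sum_add {n : ℕ} (c : Composition n) (h : c.blocks ≠ []) :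
    c.blocks.dropLast.sum + c.blocks.getLast h = n := by
  conv_rhs => rw [← c.blocks_sum, ← List.dropLast_append_getLast h]
  rw [List.sum_append]; simp

lemma sigma_comp_ext {n : ℕ} (p q : (k : ℕ) × Composition (n - k)) (h1 : p.1 = q.1)
    (h2 : p.2.blocks = q.2.blocks) : p = q := by
  obtain ⟨k, c⟩ := p; obtain ⟨k', c'⟩ := q
  dsimp at h1; subst h1
  congr 1
  cases c; cases c'; simpa using h2

noncomputable def DD {A : Type*} [Ring A] [Algebra ℚ A] (I : ℕ → A) (n : ℕ) : A :=
  ∑ c : Composition n, coefC c.blocks • (c.blocks.map I).prod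

lemma comp_zero_blocks (c : Composition 0) : c.blocks = [] := by
  cases h : c.blocks with
  | nil => rfl
  | cons a l =>
    have ha : 0 < a := c.blocks_pos (by rw [h]; exact List.mem_cons_self)
    have := c.blocks_sum
    rw [h] at this
    simp at this
    omega

instance : Unique (Composition 0) :=
  ⟨⟨⟨[], by simp, by simp⟩⟩, fun c => by
    have h := comp_zero_blocks c
    cases c; subst h; rfl⟩

lemma DD_zero {A : Type*} [Ring A] [Algebra ℚ A] (I : ℕ → A) : DD I 0 = 1 := by
  rw [DD, Finset.univ_unique, Finset.sum_singleton]
  have : (default : Composition 0).blocks = [] := comp_zero_blocks _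
  rw [comp_zero_blocks]
  simp [coefC]

lemma DD_rec {A : Type*} [Ring A] [Algebra ℚ A] (I : ℕ → A) (n : ℕ) (hn : 1 ≤ n) :
    (n : ℚ) • DD I n = ∑ k ∈ Finset.Icc 1 n, DD I (n - k) * I k := by
  have hn0 : (n : ℚ) ≠ 0 := by exact_mod_cast Nat.one_le_iff_ne_zero.1 hn
  simp only [DD, Finset.sum_mul, Finset.smul_sum]
  rw [Finset.sum_sigma']
  refine Finset.sum_bij'
    (fun (c : Composition n) _ =>
      (⟨c.blocks.getLast (blocks_ne_nil hn c),
        ⟨c.blocks.dropLast,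
          fun hi => c.blocks_pos ((List.dropLast_sublist _).subset hi),
          by have := dropLast_sum_add c (blocks_ne_nil hn c); omega⟩⟩ :
        (k : ℕ) × Composition (n - k)))
    (fun p hp =>
      ⟨p.2.blocks ++ [p.1],
        by
          intro i hi
          rcases List.mem_append.1 hi with h | h
          · exact p.2.blocks_pos h
          · simp at h; subst h
            exact (Finset.mem_Icc.1 (Finset.mem_sigma.1 hp).1).1
        , by
          rw [List.sum_append, p.2.blocks_sum]
          simp only [List.sum_cons, List.sum_nil, add_zero]
          have := (Finset.mem_Icc.1 (Finset.mem_sigma.1 hp).1).2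
          omega⟩)
    ?_ ?_ ?_ ?_ ?_
  · intro c _
    simp only [Finset.mem_sigma, Finset.mem_univ, and_true, Finset.mem_Icc]
    have h1 : 1 ≤ c.blocks.getLast (blocks_ne_nil hn c) :=
      c.blocks_pos (List.getLast_mem _)
    have h2 := dropLast_sum_add c (blocks_ne_nil hn c)
    exact ⟨h1, by omega⟩
  · intro p hp
    exact Finset.mem_univ _
  · intro c _
    cases c with
    | mk blocks bp bs =>
      simp only [Composition.mk.injEq]
      exact List.dropLast_append_getLast _
  · intro p hp
    apply sigma_comp_ext
    · exact List.getLast_concat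
    · exact List.dropLast_concat ..
  · intro c _
    have hne := blocks_ne_nil hn c
    have hd : c.blocks = c.blocks.dropLast ++ [c.blocks.getLast hne] :=
      (List.dropLast_append_getLast hne).symm
    have hs := dropLast_sum_add c hne
    conv_lhs => rw [hd]
    rw [coefC_append, List.map_append, List.prod_append]; simp only [hs]
    simp only [List.map_cons, List.map_nil, List.prod_cons, List.prod_nil, mul_one]
    rw [smul_smul]
    have : (n : ℚ) * (coefC c.blocks.dropLast * (n : ℚ)⁻¹) = coefC c.blocks.dropLast := by
      field_simp
    rw [this, smul_mul_assoc]

theorem stmt6 (A : Type*) [Ring A] [Algebra ℚ A] (I : ℕ → A) (R : ℕ → A)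
    (hR0 : R 0 = 1)
    (hrec : ∀ n : ℕ, 1 ≤ n → (n : ℚ) • R n = ∑ k ∈ Finset.Icc 1 n, R (n - k) * I k)
    (n : ℕ) (hn : 1 ≤ n) :
    R n = ∑ m ∈ Finset.Icc 1 n,
      ∑ c ∈ Finset.univ.filter (fun c : Composition n => c.length = m),
        (∏ i ∈ Finset.range c.length, (((c.blocks.take (i + 1)).sum : ℚ))⁻¹) •
          (c.blocks.map I).prod := by
  have key : ∀ m : ℕ, R m = DD I m := by
    intro m
    induction m using Nat.strong_induction_on with
    | _ m ih =>
      rcases Nat.eq_zero_or_pos m with h | h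
      · rw [h, hR0, DD_zero]
      · have h1 := hrec m h
        have h2 := DD_rec I m h
        have hm0 : (m : ℚ) ≠ 0 := by exact_mod_cast Nat.one_le_iff_ne_zero.1 h
        have heq : (m : ℚ) • R m = (m : ℚ) • DD I m := by
          rw [h1, h2]
          apply Finset.sum_congr rfl
          intro k hk
          rw [ih (m - k) (by have := (Finset.mem_Icc.1 hk).1; omega)]
        have := congrArg (fun x => (m : ℚ)⁻¹ • x) heq
        simpa [smul_smul, inv_mul_cancel₀ hm0] using this
  rw [key n]
  rw [Finset.sum_fiberwise_of_maps_to (fun c _ => ?_)]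
  · rfl
  · exact Finset.mem_Icc.2 ⟨c.length_pos_of_pos hn, c.length_le⟩
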